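/- If L ⊆ Γ^∞ is a polynomial (a finite union of monomials A₁*a₁ ⋯ A_k*a_k A_{k+1}^∞), then every idempotent of the syntactic monoid Synt(L) is locally top: for every idempotent e and every s ∈ M_e, we have ese ≤_L e in the syntactic order. -/

import Mathlib

namespace InfWords

variable {Γ : Type}

/-- Finite and infinite words over `Γ`: `Γ^∞ = Γ* ∪ Γ^ω`. -/
abbrev Word (Γ : Type) := List Γ ⊕ (ℕ → Γ)

/-- Prepend a finite word to a finite or infinite word. -/
def wappend (u : List Γ) : Word Γ → Word Γ
  | Sum.inl v => Sum.inl (u ++ v)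
  | Sum.inr f => Sum.inr fun n => if h : n < u.length then u.get ⟨n, h⟩ else f (n - u.length)

/-- The set of finite words `Γ*` inside `Γ^∞`. -/
def finWords (Γ : Type) : Set (Word Γ) := Set.range Sum.inl

/-- The set of infinite words `Γ^ω` inside `Γ^∞`. -/
def infWords (Γ : Type) : Set (Word Γ) := Set.range Sum.inr

/-- The alphabet of a word: the letters occurring in it. -/
def alph : Word Γ → Set Γ
  | Sum.inl u => {a | a ∈ u}
  | Sum.inr f => {a | ∃ n, f n = a}

/-- The imaginary part: letters occurring infinitely often. -/
def im : Word Γ → Set Γ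
  | Sum.inl _ => ∅
  | Sum.inr f => {a | ∀ n, ∃ m, n ≤ m ∧ f m = a}

/-- `A^∞`: words all of whose letters lie in `A`. -/
def infin (A : Set Γ) : Set (Word Γ) := {α | alph α ⊆ A}

/-- The basic set `u A^∞` of the alphabetic topology. -/
def cone (u : List Γ) (A : Set Γ) : Set (Word Γ) := wappend u '' infin A

/-- The alphabetic topology on `Γ^∞`, generated by the sets `u A^∞`. -/
instance alphTop : TopologicalSpace (Word Γ) :=
  TopologicalSpace.generateFrom {S | ∃ u A, S = cone u A}

/-- `cpx A`: words with `alph = im = A`. -/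
def cpx (A : Set Γ) : Set (Word Γ) := {β | alph β = A ∧ im β = A}

/-- The strict alphabetic topology, generated by the sets `u · cpx A`. -/
def strictTopo (Γ : Type) : TopologicalSpace (Word Γ) :=
  TopologicalSpace.generateFrom {S | ∃ u A, S = wappend u '' cpx A}

/-- `u` is a finite prefix of the word `α`. -/
def IsPre (u : List Γ) : Word Γ → Prop
  | Sum.inl v => u <+: v
  | Sum.inr f => ∀ i : Fin u.length, u.get i = f i.1

/-- The arrow language `→W`: every prefix extends to a prefix lying in `W`. -/
def arrow (W : Set (List Γ)) : Set (Word Γ) :=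
  {α | ∀ u, IsPre u α → ∃ v, IsPre (u ++ v) α ∧ u ++ v ∈ W}

/-- The right quotient `L / A^∞`. -/
def quotInf (L : Set (Word Γ)) (A : Set Γ) : Set (List Γ) :=
  {u | ∃ β ∈ infin A, wappend u β ∈ L}

/-- `A^im`: words whose set of letters occurring infinitely often is exactly `A`. -/
def imSet (A : Set Γ) : Set (Word Γ) := {α | im α = A}

/-- `z^ω`, with the convention `1^ω = 1`. -/
def omegaPow : List Γ → Word Γ
  | [] => Sum.inl []
  | a :: l => Sum.inr fun n => (a :: l).get ⟨n % (a :: l).length, Nat.mod_lt n (Nat.succ_pos _)⟩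

/-- The partial products `u v₀ v₁ ⋯ v_{n-1}`. -/
def partialProd (u : List Γ) (v : ℕ → List Γ) (n : ℕ) : List Γ :=
  u ++ ((List.range n).map v).flatten

/-- `α` is the (finite or infinite) product `u v₀ v₁ v₂ ⋯`, with convention `1^ω = 1`. -/
def IsInfProd (u : List Γ) (v : ℕ → List Γ) : Word Γ → Prop
  | Sum.inl w => (∀ n, partialProd u v n <+: w) ∧ ∃ n, partialProd u v n = w
  | Sum.inr f => (∀ n, IsPre (partialProd u v n) (Sum.inr f)) ∧
      ∀ k, ∃ n, k < (partialProd u v n).length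

/-- `h : Γ* → M` is a monoid homomorphism. -/
structure IsHom {M : Type} [Monoid M] (h : List Γ → M) : Prop where
  map_one : h [] = 1
  map_mul : ∀ u v, h (u ++ v) = h u * h v

/-- `[s][e]^ω`: products `u v₀ v₁ ⋯` with `h u = s` and `h vᵢ = e`. -/
def pairSet {M : Type} (h : List Γ → M) (s e : M) : Set (Word Γ) :=
  {α | ∃ u v, h u = s ∧ (∀ i, h (v i) = e) ∧ IsInfProd u v α}

/-- `(s, e)` is a linked pair. -/
def LinkedPair {M : Type} [Monoid M] (s e : M) : Prop := s * e = s ∧ e * e = e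

/-- `h` strongly recognizes `L`. -/
def StronglyRecognizes {M : Type} [Monoid M] (h : List Γ → M) (L : Set (Word Γ)) : Prop :=
  L = ⋃ (s : M) (e : M) (_ : LinkedPair s e ∧ (pairSet h s e ∩ L).Nonempty), pairSet h s e

/-- `L` is regular: strongly recognized by a surjective homomorphism onto a finite monoid. -/
def Regular (L : Set (Word Γ)) : Prop :=
  ∃ (M : Type) (i : Monoid M), Finite M ∧
    ∃ h : List Γ → M, @IsHom Γ M i h ∧ Function.Surjective h ∧ @StronglyRecognizes Γ M i h L

/-- `L` is deterministic. -/
def Deterministic (L : Set (Word Γ)) : Prop :=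
  Regular L ∧ ∃ W : Set (List Γ), L ∩ infWords Γ = arrow W ∩ infWords Γ

/-- The syntactic preorder `u ≤_L v`. -/
def synLe (L : Set (Word Γ)) (u v : List Γ) : Prop :=
  ∀ x y z : List Γ,
    (wappend (x ++ v ++ y) (omegaPow z) ∈ L → wappend (x ++ u ++ y) (omegaPow z) ∈ L) ∧
    (wappend x (omegaPow (v ++ y)) ∈ L → wappend x (omegaPow (u ++ y)) ∈ L)

/-- The syntactic congruence `u ≡_L v`. -/
def synEq (L : Set (Word Γ)) (u v : List Γ) : Prop := synLe L u v ∧ synLe L v u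

/-- `[s][e]^ω` for syntactic classes represented by words `s`, `e`. -/
def pairSetSyn (L : Set (Word Γ)) (s e : List Γ) : Set (Word Γ) :=
  {α | ∃ u v, synEq L u s ∧ (∀ i, synEq L (v i) e) ∧ IsInfProd u v α}

/-- `s` represents an element of `M_e` in the syntactic monoid of `L`:
`s` is a product of words each of which is a factor of (something equivalent to) `e`. -/
def InMe (L : Set (Word Γ)) (e s : List Γ) : Prop :=
  ∃ parts : List (List Γ), s = parts.flatten ∧ ∀ p ∈ parts, ∃ x y, synEq L (x ++ p ++ y) e

/-- Glue a factorization `u₁ a₁ u₂ a₂ ⋯ u_k a_k` into a single finite word. -/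
def glue : List (List Γ) → List (Set Γ × Γ) → List Γ
  | x :: xs, p :: l => x ++ p.2 :: glue xs l
  | _, _ => []

/-- `(us, β)` is a factorization of `α` as `u₁ a₁ ⋯ u_k a_k β` with `uᵢ ∈ Aᵢ*`, `β ∈ B^∞`. -/
def IsFactorization (l : List (Set Γ × Γ)) (B : Set Γ) (us : List (List Γ)) (β : Word Γ)
    (α : Word Γ) : Prop :=
  us.length = l.length ∧
  (∀ (i : ℕ) (h1 : i < us.length) (h2 : i < l.length),
    ∀ c ∈ us.get ⟨i, h1⟩, c ∈ (l.get ⟨i, h2⟩).1) ∧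
  β ∈ infin B ∧ α = wappend (glue us l) β

/-- The monomial `A₁* a₁ ⋯ A_k* a_k B^∞`. -/
def monomial (l : List (Set Γ × Γ)) (B : Set Γ) : Set (Word Γ) :=
  {α | ∃ us β, IsFactorization l B us β α}

/-- The monomial given by `(l, B)` is unambiguous. -/
def Unambiguous (l : List (Set Γ × Γ)) (B : Set Γ) : Prop :=
  ∀ α us β us' β', IsFactorization l B us β α → IsFactorization l B us' β' α →
    us = us' ∧ β = β'

/-- `L` is a polynomial: a finite union of monomials. -/
def IsPolynomial (L : Set (Word Γ)) : Prop :=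
  ∃ ms : List (List (Set Γ × Γ) × Set Γ), L = {α | ∃ m ∈ ms, α ∈ monomial m.1 m.2}

/-- The set of marker letters of a monomial. -/
def sndSet (l : List (Set Γ × Γ)) : Set Γ := {a | ∃ p ∈ l, p.2 = a}

/-- `M_e`: the submonoid generated by the factors of the idempotent `e`. -/
def Msub {M : Type} [Monoid M] (e : M) : Submonoid M :=
  Submonoid.closure {t | ∃ x y, x * t * y = e}

/-- The variety `DA`: `ese = e` for all idempotents `e` and all `s ∈ M_e`. -/
def IsDA (M : Type) [Monoid M] : Prop :=
  ∀ e : M, e * e = e → ∀ s ∈ Msub e, e * s * e = e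

set_option linter.dupNamespace false

theorem wappend_nil (α : Word Γ) : wappend ([] : List Γ) α = α := by
  cases α with
  | inl v => simp [wappend]
  | inr f => simp [wappend]

theorem wappend_append (u v : List Γ) (α : Word Γ) :
    wappend (u ++ v) α = wappend u (wappend v α) := by
  cases α with
  | inl w => simp [wappend]
  | inr f =>
    simp only [wappend]
    congr 1
    funext n
    rcases lt_or_ge n u.length with h | h
    · have h2 : n < u.length + v.length := by omega
      simp only [List.length_append, dif_pos h2, dif_pos h, List.get_eq_getElem]
      exact List.getElem_append_left h
    · rcases lt_or_ge n (u.length + v.length) with h2 | h2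
      · have h3 : n - u.length < v.length := by omega
        have hn : ¬ n < u.length := by omega
        simp only [List.length_append, dif_pos h2, dif_neg hn, dif_pos h3,
          List.get_eq_getElem]
        exact List.getElem_append_right h
      · have hn : ¬ n < u.length := by omega
        have h3 : ¬ n - u.length < v.length := by omega
        simp only [List.length_append, dif_neg (by omega : ¬ n < u.length + v.length),
          dif_neg hn, dif_neg h3]
        congr 1
        omega
theorem omegaPow_ne_nil {t : List Γ} (h : t ≠ []) :
    omegaPow t = Sum.inr (fun n => t.get ⟨n % t.length, Nat.mod_lt n (by
      cases t with | nil => exact absurd rfl h | cons a l => exact Nat.succ_pos _)⟩) := by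
  cases t with
  | nil => exact absurd rfl h
  | cons a l => rfl

theorem rot_mod (a b n : ℕ) (ha : 0 < a) (h : a ≤ n) :
    n % (a + b) = ((n - a) % (b + a) + a) % (a + b) := by
  conv_lhs => rw [show n = (n - a) + a from by omega]
  rw [← Nat.mod_add_mod, Nat.add_comm b a]

theorem omegaPow_rotate (p t : List Γ) :
    omegaPow (p ++ t) = wappend p (omegaPow (t ++ p)) := by
  rcases eq_or_ne p [] with rfl | hp
  · simp [wappend_nil]
  have h1 : p ++ t ≠ [] := by simp [hp]
  have h2 : t ++ p ≠ [] := by simp [hp]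
  rw [omegaPow_ne_nil h1, omegaPow_ne_nil h2]
  simp only [wappend]
  congr 1
  funext n
  have hplen : 0 < p.length := List.length_pos_iff.mpr hp
  have hL : (p ++ t).length = p.length + t.length := by simp
  have hL2 : (t ++ p).length = t.length + p.length := by simp
  rcases lt_or_ge n p.length with h | h
  · have hmod : n % (p ++ t).length = n := by rw [hL]; exact Nat.mod_eq_of_lt (by omega)
    simp only [dif_pos h, List.get_eq_getElem, hmod]
    exact List.getElem_append_left h
  · simp only [dif_neg (by omega : ¬ n < p.length), List.get_eq_getElem]
    have hrlt : (n - p.length) % (t ++ p).length < t.length + p.length := by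
      rw [hL2]; exact Nat.mod_lt _ (by omega)
    have hmodeq : n % (p ++ t).length
        = ((n - p.length) % (t ++ p).length + p.length) % (p ++ t).length := by
      rw [hL, hL2]; exact rot_mod p.length t.length n hplen h
    set r := (n - p.length) % (t ++ p).length with hr
    rcases lt_or_ge r t.length with hcase | hcase
    · have hidx : n % (p ++ t).length = r + p.length := by
        rw [hmodeq, hL]; exact Nat.mod_eq_of_lt (by omega)
      simp only [hidx]
      rw [List.getElem_append_right (by omega : p.length ≤ r + p.length),
        List.getElem_append_left hcase]
      congr 1
      omega
    · have hidx : n % (p ++ t).length = r - t.length := by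
        rw [hmodeq, hL, Nat.mod_eq_sub_mod (by omega),
          show r + p.length - (p.length + t.length) = r - t.length from by omega]
        exact Nat.mod_eq_of_lt (by omega)
      simp only [hidx]
      rw [List.getElem_append_left (by omega : r - t.length < p.length),
        List.getElem_append_right (by omega : t.length ≤ r)]

theorem omegaPow_absorb (t : List Γ) : omegaPow t = wappend t (omegaPow t) := by
  have := omegaPow_rotate t []
  simpa using this

theorem omegaPow_absorb_rep (t : List Γ) (m : ℕ) :
    omegaPow t = wappend (List.replicate m t).flatten (omegaPow t) := by
  induction m with
  | zero => simp [wappend_nil]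
  | succ k ih =>
    rw [List.replicate_succ, List.flatten_cons, wappend_append, ← ih, ← omegaPow_absorb]
theorem alph_wappend (u : List Γ) (α : Word Γ) :
    alph (wappend u α) = {a | a ∈ u} ∪ alph α := by
  cases α with
  | inl v =>
    ext a
    simp only [wappend, alph, Set.mem_union, Set.mem_setOf_eq, List.mem_append]
  | inr f =>
    ext a
    simp only [wappend, alph, Set.mem_setOf_eq, Set.mem_union]
    constructor
    · rintro ⟨n, hn⟩
      by_cases h : n < u.length
      · left
        rw [dif_pos h] at hn
        subst hn
        simp only [List.get_eq_getElem]; exact List.getElem_mem _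
      · right
        rw [dif_neg h] at hn
        exact ⟨_, hn⟩
    · rintro (h | ⟨n, hn⟩)
      · obtain ⟨i, hi, hg⟩ := List.mem_iff_getElem.mp h
        exact ⟨i, by simp [dif_pos hi]; simpa using hg⟩
      · refine ⟨u.length + n, ?_⟩
        rw [dif_neg (by omega)]
        simpa using hn

theorem alph_omegaPow (t : List Γ) (h : t ≠ []) :
    alph (omegaPow t) = {a | a ∈ t} := by
  rw [omegaPow_ne_nil h]
  ext a
  simp only [alph, Set.mem_setOf_eq]
  constructor
  · rintro ⟨n, hn⟩
    rw [← hn]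
    simp only [List.get_eq_getElem]; exact List.getElem_mem _
  · intro ha
    obtain ⟨i, hi, hg⟩ := List.mem_iff_getElem.mp ha
    refine ⟨i, ?_⟩
    simp only [List.get_eq_getElem]
    have : i % t.length = i := Nat.mod_eq_of_lt hi
    simp only [this]
    exact hg

/-- Splitting a `wappend` equality when the first prefix is shorter. -/
theorem wappend_split {P Q : List Γ} {ρ σ : Word Γ}
    (heq : wappend P ρ = wappend Q σ) (hlen : P.length ≤ Q.length) :
    ∃ r, Q = P ++ r ∧ ρ = wappend r σ := by
  cases ρ with
  | inl vρ =>
    cases σ with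
    | inl vσ =>
      simp only [wappend, Sum.inl.injEq] at heq
      have hpre : P <+: Q := by
        have h1 : P <+: Q ++ vσ := ⟨vρ, heq⟩
        have h2 : Q <+: Q ++ vσ := List.prefix_append _ _
        exact (List.prefix_of_prefix_length_le h1 h2 hlen)
      obtain ⟨r, hr⟩ := hpre
      refine ⟨r, hr.symm, ?_⟩
      subst hr
      rw [List.append_assoc] at heq
      have := List.append_cancel_left heq
      simp [wappend, this]
    | inr g => simp [wappend] at heq
  | inr f =>
    cases σ with
    | inl vσ => simp [wappend] at heq
    | inr g =>
      simp only [wappend, Sum.inr.injEq] at heq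
      have hval := fun n => congrFun heq n
      refine ⟨Q.drop P.length, ?_, ?_⟩
      · have : Q.take P.length = P := by
          apply List.ext_getElem
          · simp [hlen]
          · intro i h₁ h₂
            have hiP : i < P.length := by simp at h₁; omega
            have hiQ : i < Q.length := by omega
            have := hval i
            rw [dif_pos hiP, dif_pos hiQ] at this
            simp only [List.getElem_take, List.get_eq_getElem] at this ⊢
            exact this.symm
        conv_lhs => rw [← List.take_append_drop P.length Q, this]
      · simp only [wappend]
        congr 1
        funext m
        have := hval (P.length + m)
        rw [dif_neg (by omega)] at this
        simp only [show P.length + m - P.length = m from by omega] at this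
        rw [this]
        have hdl : (Q.drop P.length).length = Q.length - P.length := by simp
        rcases lt_or_ge m (Q.length - P.length) with hm | hm
        · rw [dif_pos (by omega), dif_pos (by omega : m < (Q.drop P.length).length)]
          simp only [List.get_eq_getElem, List.getElem_drop]
        · rw [dif_neg (by omega), dif_neg (by omega : ¬ m < (Q.drop P.length).length)]
          congr 1
          omega
section Syn

variable (L : Set (Word Γ))

theorem synLe_refl (u : List Γ) : synLe L u u := fun _ _ _ => ⟨id, id⟩

theorem synLe_trans {u v w : List Γ} (h1 : synLe L u v) (h2 : synLe L v w) :
    synLe L u w := fun x y z =>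
  ⟨fun m => (h1 x y z).1 ((h2 x y z).1 m), fun m => (h1 x y z).2 ((h2 x y z).2 m)⟩

theorem synEq_refl (u : List Γ) : synEq L u u := ⟨synLe_refl L u, synLe_refl L u⟩

theorem synEq_symm {u v : List Γ} (h : synEq L u v) : synEq L v u := ⟨h.2, h.1⟩

theorem synEq_trans {u v w : List Γ} (h1 : synEq L u v) (h2 : synEq L v w) :
    synEq L u w := ⟨synLe_trans L h1.1 h2.1, synLe_trans L h2.2 h1.2⟩

/-- Congruence property of the syntactic preorder. -/
theorem synLe_congr {u v : List Γ} (h : synLe L u v) (p q : List Γ) :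
    synLe L (p ++ u ++ q) (p ++ v ++ q) := by
  intro x y z
  constructor
  · intro m
    have e1 : x ++ (p ++ v ++ q) ++ y = (x ++ p) ++ v ++ (q ++ y) := by
      simp [List.append_assoc]
    have e2 : x ++ (p ++ u ++ q) ++ y = (x ++ p) ++ u ++ (q ++ y) := by
      simp [List.append_assoc]
    rw [e2]
    rw [e1] at m
    exact (h (x ++ p) (q ++ y) z).1 m
  · intro m
    have key : ∀ w : List Γ, wappend x (omegaPow ((p ++ w ++ q) ++ y))
        = wappend (x ++ p) (omegaPow (w ++ (q ++ y ++ p))) := by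
      intro w
      rw [show (p ++ w ++ q) ++ y = p ++ (w ++ (q ++ y)) from by simp [List.append_assoc]]
      rw [omegaPow_rotate p (w ++ (q ++ y)), wappend_append]
      congr 2
      simp [List.append_assoc]
    rw [key u]
    rw [key v] at m
    exact (h (x ++ p) (q ++ y ++ p) z).2 m

theorem synEq_congr {u v : List Γ} (h : synEq L u v) (p q : List Γ) :
    synEq L (p ++ u ++ q) (p ++ v ++ q) :=
  ⟨synLe_congr L h.1 p q, synLe_congr L h.2 p q⟩

variable {L}

/-- Concatenation of two words `≡ e` is `≡ e`, given `e·e ≡ e`. -/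
theorem synEq_concat {e u v : List Γ} (he : synEq L (e ++ e) e)
    (hu : synEq L u e) (hv : synEq L v e) : synEq L (u ++ v) e := by
  have h1 : synEq L (u ++ v) (e ++ v) := by
    have := synEq_congr L hu [] v
    simpa using this
  have h2 : synEq L (e ++ v) (e ++ e) := by
    have := synEq_congr L hv e []
    simpa using this
  exact synEq_trans L h1 (synEq_trans L h2 he)

theorem synEq_pow {e W : List Γ} (he : synEq L (e ++ e) e) (hW : synEq L W e) :
    ∀ m : ℕ, 1 ≤ m → synEq L (List.replicate m W).flatten e := by
  intro m
  induction m with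
  | zero => omega
  | succ k ih =>
    intro _
    rcases Nat.eq_or_lt_of_le (Nat.one_le_iff_ne_zero.mpr (Nat.succ_ne_zero k)) with h | h
    · rw [List.replicate_succ]
      rcases Nat.eq_zero_of_le_zero (by omega : k ≤ 0) with rfl
      simpa using hW
    · have hk : 1 ≤ k := by omega
      rw [List.replicate_succ, List.flatten_cons]
      exact synEq_concat he hW (ih hk)

end Syn
theorem flatten_replicate_succ (t : List Γ) (m : ℕ) :
    (List.replicate (m + 1) t).flatten = (List.replicate m t).flatten ++ t := by
  rw [List.replicate_succ']
  simp

theorem buildC {L : Set (Word Γ)} {e : List Γ} (he : synEq L (e ++ e) e) :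
    ∀ parts : List (List Γ), (∀ p ∈ parts, ∃ x y, synEq L (x ++ p ++ y) e) →
    ∃ C : List Γ, synEq L (e ++ C) e ∧ ∀ a ∈ parts.flatten, a ∈ C := by
  intro parts
  induction parts with
  | nil => exact fun _ => ⟨e, he, by simp⟩
  | cons p ps ih =>
    intro h
    obtain ⟨C', hC', hmem'⟩ := ih (fun q hq => h q (List.mem_cons_of_mem _ hq))
    obtain ⟨x, y, hxy⟩ := h p List.mem_cons_self
    refine ⟨(x ++ p ++ y) ++ C', ?_, ?_⟩
    · have h1 : synEq L (e ++ ((x ++ p ++ y) ++ C')) (e ++ (e ++ C')) := by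
        have := synEq_congr L hxy e C'
        constructor
        · exact fun a b c => by
            have := (this.1) a b c
            constructor
            · intro mm
              have := (synEq_congr L hxy e C').1 a b c
              simpa [List.append_assoc] using this.1 (by simpa [List.append_assoc] using mm)
            · intro mm
              have := (synEq_congr L hxy e C').1 a b c
              simpa [List.append_assoc] using this.2 (by simpa [List.append_assoc] using mm)
        · exact fun a b c => by
            constructor
            · intro mm
              have := (synEq_congr L hxy e C').2 a b c
              simpa [List.append_assoc] using this.1 (by simpa [List.append_assoc] using mm)
            · intro mm
              have := (synEq_congr L hxy e C').2 a b c
              simpa [List.append_assoc] using this.2 (by simpa [List.append_assoc] using mm)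
      have h2 : synEq L (e ++ (e ++ C')) ((e ++ e) ++ C') := by
        rw [List.append_assoc]; exact synEq_refl L _
      have h3 : synEq L ((e ++ e) ++ C') (e ++ C') := by
        have := synEq_congr L he [] C'
        simpa using this
      exact synEq_trans L h1 (synEq_trans L h2 (synEq_trans L h3 hC'))
    · intro a ha
      rw [List.flatten_cons, List.mem_append] at ha
      rcases ha with ha | ha
      · exact List.mem_append.mpr (Or.inl (by simp [ha]))
      · exact List.mem_append.mpr (Or.inr (hmem' a ha))
theorem glue_nil (us : List (List Γ)) : glue us ([] : List (Set Γ × Γ)) = [] := by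
  cases us <;> rfl

theorem glue_cons (u₀ : List Γ) (us : List (List Γ)) (A : Set Γ) (a : Γ)
    (l : List (Set Γ × Γ)) : glue (u₀ :: us) ((A, a) :: l) = u₀ ++ a :: glue us l := rfl

theorem isFact_cons {A : Set Γ} {a : Γ} {l' : List (Set Γ × Γ)} {B : Set Γ}
    {u₀ : List Γ} {us' : List (List Γ)} {β α : Word Γ}
    (hu : ∀ c ∈ u₀, c ∈ A)
    (hf : IsFactorization l' B us' β (wappend (glue us' l') β))
    (hα : α = wappend (u₀ ++ a :: glue us' l') β) :
    IsFactorization ((A, a) :: l') B (u₀ :: us') β α := by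
  obtain ⟨hlen, hlet, hinf, -⟩ := hf
  refine ⟨by simp [hlen], ?_, hinf, by rw [hα, glue_cons]⟩
  intro i h1 h2
  cases i with
  | zero => simpa using hu
  | succ j =>
    have h1' : j < us'.length := by simpa using h1
    have h2' : j < l'.length := by simpa using h2
    simpa using hlet j h1' h2'

theorem isFact_cons_elim {A : Set Γ} {a : Γ} {l' : List (Set Γ × Γ)} {B : Set Γ}
    {us : List (List Γ)} {β α : Word Γ}
    (h : IsFactorization ((A, a) :: l') B us β α) :
    ∃ u₀ us', us = u₀ :: us' ∧ (∀ c ∈ u₀, c ∈ A) ∧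
      IsFactorization l' B us' β (wappend (glue us' l') β) ∧
      α = wappend (u₀ ++ a :: glue us' l') β := by
  obtain ⟨hlen, hlet, hinf, hα⟩ := h
  cases us with
  | nil => simp at hlen
  | cons u₀ us' =>
    refine ⟨u₀, us', rfl, ?_, ⟨by simpa using hlen, ?_, hinf, rfl⟩, by rwa [glue_cons] at hα⟩
    · intro c hc
      have := hlet 0 (by simp) (by simp)
      simpa using this c hc
    · intro i h1 h2
      have h1' : i + 1 < (u₀ :: us').length := by simpa using h1
      have h2' : i + 1 < ((A, a) :: l').length := by simpa using h2
      simpa using hlet (i + 1) h1' h2'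
theorem rep_flat_succ (W : List Γ) (m : ℕ) :
    (List.replicate (m + 1) W).flatten = W ++ (List.replicate m W).flatten := by
  rw [List.replicate_succ, List.flatten_cons]

theorem mem_rep_flat {W : List Γ} {a : Γ} {m : ℕ} (h : a ∈ (List.replicate m W).flatten) :
    a ∈ W := by
  obtain ⟨l, hl, hal⟩ := List.mem_flatten.mp h
  rwa [List.eq_of_mem_replicate hl] at hal

theorem mem_rep_flat' {W : List Γ} {a : Γ} {m : ℕ} (hm : 1 ≤ m) (h : a ∈ W) :
    a ∈ (List.replicate m W).flatten := by
  obtain ⟨k, rfl⟩ := Nat.exists_eq_add_of_le hm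
  rw [Nat.add_comm, rep_flat_succ]
  exact List.mem_append.mpr (Or.inl h)

theorem insert_lemma (B : Set Γ) (W ins : List Γ) (hins : ∀ a ∈ ins, a ∈ W) :
    ∀ (l : List (Set Γ × Γ)), ∀ N : ℕ, l.length < N → ∀ (x : List Γ) (τ : Word Γ),
    wappend (x ++ (List.replicate N W).flatten) τ ∈ monomial l B →
    ∃ c : ℕ, c + 1 ≤ N ∧ wappend (x ++ (List.replicate (c + 1) W).flatten ++ ins
        ++ (List.replicate (N - (c + 1)) W).flatten) τ ∈ monomial l B := by
  intro l
  induction l with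
  | nil =>
    intro N hN x τ hmem
    obtain ⟨us, β, hF⟩ := hmem
    obtain ⟨hlen, -, hinf, hα⟩ := hF
    have hus : us = [] := List.length_eq_zero_iff.mp (by simpa using hlen)
    subst hus
    rw [glue_nil, wappend_nil] at hα
    refine ⟨0, by omega, [], _, ⟨by simp, by intro i h1 h2; simp at h2, ?_, by
      rw [glue_nil, wappend_nil]⟩⟩
    have hβ : alph β ⊆ B := hinf
    rw [← hα] at hβ
    intro b hb
    rw [alph_wappend] at hb
    apply hβ
    rw [alph_wappend]
    rcases hb with hb | hb
    · simp only [Set.mem_setOf_eq, List.append_assoc, List.mem_append] at hb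
      have hbW : b ∈ x ∨ b ∈ W := by
        rcases hb with hb | hb | hb | hb
        · exact Or.inl hb
        · exact Or.inr (mem_rep_flat hb)
        · exact Or.inr (hins b hb)
        · exact Or.inr (mem_rep_flat hb)
      apply Set.mem_union_left
      simp only [Set.mem_setOf_eq, List.mem_append]
      rcases hbW with hb | hb
      · exact Or.inl hb
      · exact Or.inr (mem_rep_flat' (by omega) hb)
    · exact Set.mem_union_right _ hb
  | cons Aa l' ih =>
    obtain ⟨A, a⟩ := Aa
    intro N hN x τ hmem
    obtain ⟨us, β, hF⟩ := hmem
    obtain ⟨u₀, us', rfl, hu₀, hF', hα⟩ := isFact_cons_elim hF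
    have hNpos : 1 ≤ N := by simp at hN; omega
    have hrepN : (List.replicate N W).flatten = W ++ (List.replicate (N - 1) W).flatten := by
      rw [show N = (N - 1) + 1 from by omega, rep_flat_succ]
      simp
    rcases le_or_gt (u₀.length + 1) x.length with hcase1 | hcase1
    · -- marker strictly inside x : strip u₀ ++ [a] and recurse with same N
      have heq : wappend (u₀ ++ [a]) (wappend (glue us' l') β)
          = wappend x (wappend (List.replicate N W).flatten τ) := by
        rw [← wappend_append, ← wappend_append, List.append_assoc, List.singleton_append, ← hα]
      obtain ⟨x', hx, hmid⟩ := wappend_split heq (by simpa using hcase1)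
      have hsub : wappend (x' ++ (List.replicate N W).flatten) τ ∈ monomial l' B :=
        ⟨us', β, hF'.1, hF'.2.1, hF'.2.2.1, (wappend_append _ _ _).trans hmid.symm⟩
      obtain ⟨c, hc, us₂, β₂, hF₂⟩ := ih N (by simp at hN; omega) x' τ hsub
      refine ⟨c, hc, u₀ :: us₂, β₂, isFact_cons hu₀
        ⟨hF₂.1, hF₂.2.1, hF₂.2.2.1, rfl⟩ ?_⟩
      have h4 := hF₂.2.2.2
      calc wappend (x ++ (List.replicate (c + 1) W).flatten ++ ins
              ++ (List.replicate (N - (c + 1)) W).flatten) τ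
          = wappend ((u₀ ++ [a]) ++ (x' ++ (List.replicate (c + 1) W).flatten ++ ins
              ++ (List.replicate (N - (c + 1)) W).flatten)) τ := by
            rw [hx]; simp [List.append_assoc]
        _ = wappend (u₀ ++ [a]) (wappend (x' ++ (List.replicate (c + 1) W).flatten ++ ins
              ++ (List.replicate (N - (c + 1)) W).flatten) τ) := wappend_append _ _ _
        _ = wappend (u₀ ++ [a]) (wappend (glue us₂ l') β₂) := by rw [h4]
        _ = wappend ((u₀ ++ [a]) ++ glue us₂ l') β₂ := (wappend_append _ _ _).symm
        _ = wappend (u₀ ++ a :: glue us₂ l') β₂ := by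
            congr 1; simp
    · rcases le_or_gt (x.length + W.length) u₀.length with hcase2 | hcase2
      · -- first copy of W inside u₀ : insert there, c = 0
        have heq : wappend (x ++ W) (wappend (List.replicate (N - 1) W).flatten τ)
            = wappend u₀ (wappend (a :: glue us' l') β) := by
          rw [← wappend_append, ← wappend_append, List.append_assoc, ← hrepN, ← hα]
        obtain ⟨h, hu, hmid⟩ := wappend_split heq (by simpa using hcase2)
        refine ⟨0, by omega, (x ++ W ++ ins ++ h) :: us', β, isFact_cons ?_
          ⟨hF'.1, hF'.2.1, hF'.2.2.1, rfl⟩ ?_⟩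
        · intro c hc
          simp only [List.append_assoc, List.mem_append] at hc
          have : c ∈ u₀ ∨ c ∈ ins := by
            rcases hc with hc | hc | hc | hc
            · exact Or.inl (by rw [hu]; simp [hc])
            · exact Or.inl (by rw [hu]; simp [List.append_assoc, hc])
            · exact Or.inr hc
            · exact Or.inl (by rw [hu]; simp [List.append_assoc, hc])
          rcases this with hc' | hc'
          · exact hu₀ c hc'
          · exact hu₀ c (by rw [hu]; simp [List.append_assoc, hins c hc'])
        · calc wappend (x ++ (List.replicate (0 + 1) W).flatten ++ ins
                  ++ (List.replicate (N - (0 + 1)) W).flatten) τ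
              = wappend ((x ++ W ++ ins) ++ (List.replicate (N - 1) W).flatten) τ := by
                congr 1; simp [rep_flat_succ, List.append_assoc]
            _ = wappend (x ++ W ++ ins) (wappend (List.replicate (N - 1) W).flatten τ) :=
                wappend_append _ _ _
            _ = wappend (x ++ W ++ ins) (wappend h (wappend (a :: glue us' l') β)) := by
                rw [hmid]
            _ = wappend (x ++ W ++ ins) (wappend (h ++ a :: glue us' l') β) := by
                congr 1
                exact (wappend_append _ _ _).symm
            _ = wappend ((x ++ W ++ ins) ++ (h ++ a :: glue us' l')) β :=
                (wappend_append _ _ _).symm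
            _ = wappend ((x ++ W ++ ins ++ h) ++ a :: glue us' l') β := by
                congr 1; simp [List.append_assoc]
      · -- the marker is inside the first copy of W : strip u₀ ++ [a], recurse with N - 1
        have heq : wappend (u₀ ++ [a]) (wappend (glue us' l') β)
            = wappend (x ++ W) (wappend (List.replicate (N - 1) W).flatten τ) := by
          rw [← wappend_append, ← wappend_append, List.append_assoc, List.singleton_append,
            ← hα, List.append_assoc, ← hrepN]
        obtain ⟨x'', hx, hmid⟩ := wappend_split heq (by simp; omega)
        have hN' : l'.length < N - 1 := by simp at hN; omega
        have hsub : wappend (x'' ++ (List.replicate (N - 1) W).flatten) τ ∈ monomial l' B :=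
          ⟨us', β, hF'.1, hF'.2.1, hF'.2.2.1, (wappend_append _ _ _).trans hmid.symm⟩
        obtain ⟨c', hc', us₂, β₂, hF₂⟩ := ih (N - 1) hN' x'' τ hsub
        refine ⟨c' + 1, by omega, u₀ :: us₂, β₂, isFact_cons hu₀
          ⟨hF₂.1, hF₂.2.1, hF₂.2.2.1, rfl⟩ ?_⟩
        have harith : N - 1 - (c' + 1) = N - (c' + 1 + 1) := by omega
        have h4 := hF₂.2.2.2
        calc wappend (x ++ (List.replicate (c' + 1 + 1) W).flatten ++ ins
                ++ (List.replicate (N - (c' + 1 + 1)) W).flatten) τ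
            = wappend ((u₀ ++ [a]) ++ (x'' ++ (List.replicate (c' + 1) W).flatten ++ ins
                ++ (List.replicate (N - 1 - (c' + 1)) W).flatten)) τ := by
              congr 1
              rw [rep_flat_succ W (c' + 1), harith]
              simp only [← List.append_assoc]
              rw [hx]
              try simp [List.append_assoc]
          _ = wappend (u₀ ++ [a]) (wappend (x'' ++ (List.replicate (c' + 1) W).flatten ++ ins
                ++ (List.replicate (N - 1 - (c' + 1)) W).flatten) τ) := wappend_append _ _ _
          _ = wappend (u₀ ++ [a]) (wappend (glue us₂ l') β₂) := by rw [h4]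
          _ = wappend ((u₀ ++ [a]) ++ glue us₂ l') β₂ := (wappend_append _ _ _).symm
          _ = wappend (u₀ ++ a :: glue us₂ l') β₂ := by congr 1; simp
theorem rep_flat_length (t : List Γ) (m : ℕ) :
    (List.replicate m t).flatten.length = m * t.length := by
  induction m with
  | zero => simp
  | succ k ih => rw [rep_flat_succ]; simp [ih]; ring

theorem len_le_listsum (ms : List (List (Set Γ × Γ) × Set Γ)) :
    ∀ m ∈ ms, m.1.length ≤ (ms.map (fun m => m.1.length)).sum := by
  induction ms with
  | nil => simp
  | cons hd tl ih =>
    intro m hm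
    rw [List.mem_cons] at hm
    rcases hm with rfl | hm
    · simp
    · have := ih m hm
      simp only [List.map_cons, List.sum_cons]
      omega
end InfWords
theorem polynomial_idempotents_locally_top (Γ : Type) [Fintype Γ]
    (L : Set (InfWords.Word Γ)) (hpol : InfWords.IsPolynomial L)
    (e : List Γ) (he : InfWords.synEq L (e ++ e) e)
    (s : List Γ) (hs : InfWords.InMe L e s) :
    InfWords.synLe L (e ++ s ++ e) e := by
  classical
  open InfWords in
  obtain ⟨ms, hL⟩ := hpol
  obtain ⟨parts, hs1, hparts⟩ := hs
  obtain ⟨C, hC, hmemC⟩ := InfWords.buildC he parts hparts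
  set W : List Γ := e ++ C with hWdef
  have hWe : InfWords.synEq L W e := hC
  by_cases hWnil : W = []
  · -- degenerate case : e = [] and s = []
    have heC : e = [] ∧ C = [] := by
      rw [hWdef] at hWnil
      exact List.append_eq_nil_iff.mp hWnil
    have he0 : e = [] := heC.1
    have hC0 : C = [] := heC.2
    have hs0 : s = [] := by
      rw [hs1]
      rw [List.eq_nil_iff_forall_not_mem]
      intro a ha
      have := hmemC a ha
      rw [hC0] at this
      simp at this
    rw [he0, hs0]
    simpa using InfWords.synLe_refl L ([] : List Γ)
  -- main case
  set K : ℕ := (ms.map (fun m => m.1.length)).sum with hK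
  set N : ℕ := K + 1 with hN
  have hNl : ∀ m ∈ ms, m.1.length < N := fun m hm =>
    lt_of_le_of_lt (InfWords.len_le_listsum ms m hm) (by omega)
  have hWNe : InfWords.synEq L (List.replicate N W).flatten e :=
    InfWords.synEq_pow he hWe N (by omega)
  have hinsW : ∀ a ∈ s ++ e, a ∈ W := by
    intro a ha
    rw [List.mem_append] at ha
    rcases ha with ha | ha
    · rw [hWdef, List.mem_append]
      exact Or.inr (hmemC a (by rwa [← hs1]))
    · rw [hWdef, List.mem_append]
      exact Or.inl ha
  -- Clause 1, proved for all contexts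
  have H1 : ∀ x y z : List Γ, wappend (x ++ e ++ y) (InfWords.omegaPow z) ∈ L →
      wappend (x ++ (e ++ s ++ e) ++ y) (InfWords.omegaPow z) ∈ L := by
    intro x y z h₁
    have h₂ : wappend (x ++ (List.replicate N W).flatten ++ y) (InfWords.omegaPow z) ∈ L :=
      (hWNe.1 x y z).1 h₁
    rw [hL] at h₂
    obtain ⟨m, hm, hmem⟩ := h₂
    have hform : wappend (x ++ (List.replicate N W).flatten ++ y) (InfWords.omegaPow z)
        = wappend (x ++ (List.replicate N W).flatten)
            (wappend y (InfWords.omegaPow z)) := by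
      rw [← InfWords.wappend_append]
    rw [hform] at hmem
    obtain ⟨c, hc, hmem'⟩ := InfWords.insert_lemma m.2 W (s ++ e) hinsW m.1 N
      (hNl m hm) x (wappend y (InfWords.omegaPow z)) hmem
    -- the inserted middle word is ≡ e ++ s ++ e
    have hA : InfWords.synEq L (List.replicate (c + 1) W).flatten e :=
      InfWords.synEq_pow he hWe _ (by omega)
    set V : List Γ := (List.replicate (c + 1) W).flatten ++ (s ++ e)
        ++ (List.replicate (N - (c + 1)) W).flatten with hV
    have hword : wappend (x ++ (List.replicate (c + 1) W).flatten ++ (s ++ e)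
        ++ (List.replicate (N - (c + 1)) W).flatten) (wappend y (InfWords.omegaPow z))
        = wappend (x ++ V ++ y) (InfWords.omegaPow z) := by
      rw [← InfWords.wappend_append]
      congr 1
      simp [hV, List.append_assoc]
    rw [hword] at hmem'
    have hmemL : wappend (x ++ V ++ y) (InfWords.omegaPow z) ∈ L := by
      rw [hL]
      exact ⟨m, hm, hmem'⟩
    have hVese : InfWords.synEq L V (e ++ s ++ e) := by
      set B : List Γ := (List.replicate (N - (c + 1)) W).flatten with hB'
      have step1 : InfWords.synEq L V (e ++ (s ++ (e ++ B))) := by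
        simpa [hV, List.append_assoc] using
          InfWords.synEq_congr L hA [] ((s ++ e) ++ B)
      rcases Nat.eq_zero_or_pos (N - (c + 1)) with hn | hn
      · have hBnil : B = [] := by rw [hB', hn]; simp
        rw [hBnil] at step1
        simpa [List.append_assoc] using step1
      · have hB : InfWords.synEq L B e := InfWords.synEq_pow he hWe _ (by omega)
        have step2 : InfWords.synEq L (e ++ (s ++ (e ++ B))) (e ++ (s ++ (e ++ e))) := by
          simpa [List.append_assoc] using InfWords.synEq_congr L hB (e ++ s ++ e) []
        have step3 : InfWords.synEq L (e ++ (s ++ (e ++ e))) (e ++ (s ++ e)) := by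
          simpa [List.append_assoc] using InfWords.synEq_congr L he (e ++ s) []
        have := InfWords.synEq_trans L step1 (InfWords.synEq_trans L step2 step3)
        simpa [List.append_assoc] using this
    exact (hVese.2 x y z).1 hmemL
  intro x y z
  refine ⟨H1 x y z, ?_⟩
  -- Clause 2
  intro h₁
  set T : List Γ := e ++ s ++ e ++ y with hT
  set P : List Γ := (List.replicate N W).flatten ++ y with hP
  have hPne : P ≠ [] := by
    rw [hP, show N = (N - 1) + 1 from by omega, InfWords.rep_flat_succ]
    simp [hWnil]
  have h₂ : wappend x (InfWords.omegaPow P) ∈ L := (hWNe.1 x y []).2 h₁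
  rw [hL] at h₂
  obtain ⟨m, hm, hmem⟩ := h₂
  obtain ⟨us, β, hF⟩ := hmem
  set G : List Γ := InfWords.glue us m.1 with hG
  set a : ℕ := G.length with ha
  have hXeq : wappend x (InfWords.omegaPow P)
      = wappend (x ++ (List.replicate a P).flatten) (InfWords.omegaPow P) := by
    rw [InfWords.wappend_append, ← InfWords.omegaPow_absorb_rep]
  have heq : wappend G β
      = wappend (x ++ (List.replicate a P).flatten) (InfWords.omegaPow P) := by
    rw [← hF.2.2.2, hXeq]
  have hlen : G.length ≤ (x ++ (List.replicate a P).flatten).length := by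
    rw [List.length_append, InfWords.rep_flat_length]
    have hP1 : 1 ≤ P.length := by
      cases hPl : P with
      | nil => exact absurd hPl hPne
      | cons _ _ => simp
    calc G.length = a := ha.symm ▸ rfl
      _ ≤ a * P.length := Nat.le_mul_of_pos_right a (by omega)
      _ ≤ x.length + a * P.length := by omega
  obtain ⟨r, hXr, hβr⟩ := InfWords.wappend_split heq hlen
  -- the new tail
  have hPB : ∀ b ∈ P, b ∈ m.2 := by
    intro b hb
    have h1 : b ∈ InfWords.alph (InfWords.omegaPow P) := by
      rw [InfWords.alph_omegaPow P hPne]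
      exact hb
    have h2 : b ∈ InfWords.alph β := by
      rw [hβr, InfWords.alph_wappend]
      exact Set.mem_union_right _ h1
    exact hF.2.2.1 h2
  have hrB : ∀ b ∈ r, b ∈ m.2 := by
    intro b hb
    have h2 : b ∈ InfWords.alph β := by
      rw [hβr, InfWords.alph_wappend]
      exact Set.mem_union_left _ hb
    exact hF.2.2.1 h2
  have hTP : ∀ b ∈ T, b ∈ P := by
    intro b hb
    rw [hT] at hb
    simp only [List.append_assoc, List.mem_append] at hb
    have hbWy : b ∈ W ∨ b ∈ y := by
      rcases hb with hb | hb | hb | hb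
      · exact Or.inl (by rw [hWdef]; exact List.mem_append.mpr (Or.inl hb))
      · exact Or.inl (hinsW b (List.mem_append.mpr (Or.inl hb)))
      · exact Or.inl (by rw [hWdef]; exact List.mem_append.mpr (Or.inl hb))
      · exact Or.inr hb
    rw [hP, List.mem_append]
    rcases hbWy with hb | hb
    · exact Or.inl (InfWords.mem_rep_flat' (by omega) hb)
    · exact Or.inr hb
  have hβ'' : wappend r (InfWords.omegaPow T) ∈ InfWords.infin m.2 := by
    intro b hb
    rw [InfWords.alph_wappend] at hb
    rcases hb with hb | hb
    · exact hrB b hb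
    · rcases eq_or_ne T [] with hTnil | hTnil
      · rw [hTnil] at hb
        simp only [InfWords.omegaPow] at hb
        simp [InfWords.alph] at hb
      · rw [InfWords.alph_omegaPow T hTnil] at hb
        exact hPB b (hTP b hb)
  -- the modified word is in the monomial, hence in L
  have hω'' : wappend (x ++ (List.replicate a P).flatten) (InfWords.omegaPow T) ∈ L := by
    rw [hL]
    refine ⟨m, hm, us, wappend r (InfWords.omegaPow T), hF.1, hF.2.1, hβ'', ?_⟩
    rw [← hG, hXr, InfWords.wappend_append]
  -- strip the extra copies of P
  have strip : ∀ j : ℕ, wappend (x ++ (List.replicate j P).flatten) (InfWords.omegaPow T) ∈ L →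
      wappend x (InfWords.omegaPow T) ∈ L := by
    intro j
    induction j with
    | zero => intro h; simpa [InfWords.wappend_nil] using h
    | succ k ih =>
      intro h
      apply ih
      have hform : wappend (x ++ (List.replicate (k + 1) P).flatten) (InfWords.omegaPow T)
          = wappend ((x ++ (List.replicate k P).flatten) ++ (List.replicate N W).flatten
            ++ y) (InfWords.omegaPow T) := by
        congr 1
        rw [InfWords.flatten_replicate_succ, hP]
        simp [List.append_assoc]
      rw [hform] at h
      have h2 := ((hWNe.2) (x ++ (List.replicate k P).flatten) y T).1 h
      have h3 := H1 (x ++ (List.replicate k P).flatten) y T h2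
      have hform2 : wappend ((x ++ (List.replicate k P).flatten) ++ (e ++ s ++ e) ++ y)
          (InfWords.omegaPow T)
          = wappend (x ++ (List.replicate k P).flatten) (InfWords.omegaPow T) := by
        have h5 : (x ++ (List.replicate k P).flatten) ++ (e ++ s ++ e) ++ y
            = (x ++ (List.replicate k P).flatten) ++ T := by
          rw [hT]; exact List.append_assoc _ _ _
        rw [h5, InfWords.wappend_append, ← InfWords.omegaPow_absorb]
      rwa [hform2] at h3
  exact strip a hω''
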